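/- Polar decomposition in Hilbert C*-modules: let A be a C*-algebra, E and F Hilbert A-modules, and T : E → F a continuous linear map with adjoint S : F → E. Assume the closure of T(E) is orthocomplemented in F (every y ∈ F can be written y = y₁ + y₂ with y₁ ∈ closure(T(E)) and ⟪T x, y₂⟫ = 0 for all x ∈ E) and the closure of S(F) is orthocomplemented in E (analogously). Let R : E → E be a continuous linear adjointable map which is self-adjoint (⟪R x, y⟫ = ⟪x, R y⟫ for all x, y), positive (0 ≤ ⟪x, R x⟫ in A for all x), and satisfies R ∘ R = S ∘ T (i.e. R = |T|). Then there exists a unique continuous linear adjointable u : E → F such that u vanishes on ker T and T = u ∘ R. Moreover u is a partial isometry: denoting its adjoint u*, one has u ∘ u* ∘ u = u, the range of u equals closure(T(E)), and the range of u* equals closure(S(F)). -/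

import Mathlib

open scoped RightActions

/-- The Hilbert C⋆-module class as it stood in Mathlib (December 2024): a *right* `A`-module
(`SMul Aᵐᵒᵖ E`) with an `A`-valued inner product with `⟪x, y <• a⟫ = ⟪x, y⟫ * a`.
Mathlib's `CStarModule` now denotes left modules, so the old notion is restated here. -/
class RightCStarModule (A : outParam <| Type*) (E : Type*) [NonUnitalSemiring A] [StarRing A]
    [Module ℂ A] [AddCommGroup E] [Module ℂ E] [PartialOrder A] [SMul Aᵐᵒᵖ E] [Norm A] [Norm E]
    extends Inner A E where
  inner_add_right {x} {y} {z} : inner x (y + z) = inner x y + inner x z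
  inner_self_nonneg {x} : 0 ≤ inner x x
  inner_self {x} : inner x x = 0 ↔ x = 0
  inner_op_smul_right {a : A} {x y : E} : inner x (y <• a) = inner x y * a
  inner_smul_right_complex {z : ℂ} {x} {y} : inner x (z • y) = z • inner x y
  star_inner x y : star (inner x y) = inner y x
  norm_eq_sqrt_norm_inner_self x : ‖x‖ = Real.sqrt ‖inner x x‖

variable {A : Type*} [CStarAlgebra A] [PartialOrder A] [StarOrderedRing A]
variable {E : Type*} [NormedAddCommGroup E] [NormedSpace ℂ E] [SMul Aᵐᵒᵖ E]
  [RightCStarModule A E] [CompleteSpace E]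
variable {F : Type*} [NormedAddCommGroup F] [NormedSpace ℂ F] [SMul Aᵐᵒᵖ F]
  [RightCStarModule A F] [CompleteSpace F]

local notation "⟪" x ", " y "⟫" => inner (𝕜 := A) x y

section RCSM

variable {G : Type*} [NormedAddCommGroup G] [NormedSpace ℂ G] [SMul Aᵐᵒᵖ G] [RightCStarModule A G]

namespace RightCStarModule

lemma inner_add_left {x y z : G} : ⟪x + y, z⟫ = ⟪x, z⟫ + ⟪y, z⟫ := by
  rw [← star_inner z (x + y), inner_add_right, star_add, star_inner, star_inner]

lemma inner_zero_right {x : G} : ⟪x, 0⟫ = 0 :=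
  (AddMonoidHom.mk' (fun y : G => ⟪x, y⟫) (fun _ _ => inner_add_right)).map_zero

lemma inner_zero_left {x : G} : ⟪0, x⟫ = 0 :=
  (AddMonoidHom.mk' (fun y : G => ⟪y, x⟫) (fun _ _ => inner_add_left)).map_zero

lemma inner_sub_right {x y z : G} : ⟪x, y - z⟫ = ⟪x, y⟫ - ⟪x, z⟫ :=
  (AddMonoidHom.mk' (fun y : G => ⟪x, y⟫) (fun _ _ => inner_add_right)).map_sub y z

lemma inner_sub_left {x y z : G} : ⟪x - y, z⟫ = ⟪x, z⟫ - ⟪y, z⟫ :=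
  (AddMonoidHom.mk' (fun y : G => ⟪y, z⟫) (fun _ _ => inner_add_left)).map_sub x y

lemma inner_smul_left_complex {c : ℂ} {x y : G} : ⟪c • x, y⟫ = star c • ⟪x, y⟫ := by
  rw [← star_inner y (c • x), inner_smul_right_complex, star_smul, star_inner]

lemma inner_op_smul_left {a : A} {x y : G} : ⟪x <• a, y⟫ = star a * ⟪x, y⟫ := by
  rw [← star_inner y (x <• a), inner_op_smul_right, star_mul, star_inner]

lemma inner_smul_right_real {r : ℝ} {x y : G} : ⟪x, r • y⟫ = r • ⟪x, y⟫ := by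
  have h₁ : r • y = (r : ℂ) • y := by simp
  rw [h₁, inner_smul_right_complex]
  simp

lemma inner_smul_left_real {r : ℝ} {x y : G} : ⟪r • x, y⟫ = r • ⟪x, y⟫ := by
  have h₁ : r • x = (r : ℂ) • x := by simp
  rw [h₁, inner_smul_left_complex]
  simp

lemma norm_sq_eq {x : G} : ‖x‖ ^ 2 = ‖⟪x, x⟫‖ := by
  rw [norm_eq_sqrt_norm_inner_self x, Real.sq_sqrt (norm_nonneg _)]

lemma inner_mul_inner_swap_le' {x y : G} : ⟪y, x⟫ * ⟪x, y⟫ ≤ ‖x‖ ^ 2 • ⟪y, y⟫ := by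
  rcases eq_or_ne x 0 with h | h
  · simp [h, inner_zero_left, inner_zero_right]
  · have hpos : 0 < ‖x‖ := norm_pos_iff.mpr h
    set a := ⟪x, y⟫ with ha
    have hya : ⟪y, x⟫ = star a := (star_inner x y).symm
    have h₁ : (0 : A) ≤ ‖x‖ ^ 2 • (star a * a) - ‖x‖ ^ 2 • (star a * a)
        - ‖x‖ ^ 2 • (star a * a) + ‖x‖ ^ 2 • (‖x‖ ^ 2 • ⟪y, y⟫) := by
      calc (0 : A) ≤ ⟪x <• a - ‖x‖ ^ 2 • y, x <• a - ‖x‖ ^ 2 • y⟫ := inner_self_nonneg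
        _ = star a * ⟪x, x⟫ * a - ‖x‖ ^ 2 • (star a * a)
            - ‖x‖ ^ 2 • (star a * a) + ‖x‖ ^ 2 • (‖x‖ ^ 2 • ⟪y, y⟫) := by
          simp only [inner_sub_right, inner_op_smul_right, inner_sub_left,
            inner_op_smul_left, inner_smul_left_real, inner_smul_right_real, hya, ← ha,
            sub_mul, smul_mul_assoc, smul_sub, mul_assoc]
          abel
        _ ≤ _ := by
          gcongr
          calc _ ≤ ‖⟪x, x⟫‖ • (star a * a) :=
              CStarAlgebra.star_left_conjugate_le_norm_smul (hb := star_inner x x)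
            _ = ‖x‖ ^ 2 • (star a * a) := by rw [norm_sq_eq]
    rw [hya]
    have h₂ : ‖x‖ ^ 2 • (star a * a) ≤ ‖x‖ ^ 2 • (‖x‖ ^ 2 • ⟪y, y⟫) := by
      have h₃ := sub_nonneg.mpr (le_refl (‖x‖ ^ 2 • (star a * a)))
      rw [sub_self] at h₁
      simpa [sub_eq_add_neg, add_comm] using h₁
    rwa [smul_le_smul_iff_of_pos_left (pow_pos hpos _)] at h₂

variable (G) in
lemma norm_inner_le {x y : G} : ‖⟪x, y⟫‖ ≤ ‖x‖ * ‖y‖ := by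
  have := calc ‖⟪x, y⟫‖ ^ 2 = ‖⟪y, x⟫ * ⟪x, y⟫‖ := by
                rw [← star_inner x, CStarRing.norm_star_mul_self, pow_two]
    _ ≤ ‖‖x‖ ^ 2 • ⟪y, y⟫‖ := by
                refine CStarAlgebra.norm_le_norm_of_nonneg_of_le ?_ inner_mul_inner_swap_le'
                rw [← star_inner x]
                exact star_mul_self_nonneg ⟪x, y⟫
    _ = ‖x‖ ^ 2 * ‖⟪y, y⟫‖ := by simp [norm_smul]
    _ = ‖x‖ ^ 2 * ‖y‖ ^ 2 := by rw [norm_sq_eq (x := y)]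
    _ = (‖x‖ * ‖y‖) ^ 2 := by simp only [mul_pow]
  refine (pow_le_pow_iff_left₀ (norm_nonneg _) ?_ (by simp)).mp this
  exact mul_nonneg (norm_nonneg _) (norm_nonneg _)

lemma continuous_inner : Continuous (fun x : G × G => ⟪x.1, x.2⟫) := by
  let L : G →L⋆[ℂ] G →L[ℂ] A := LinearMap.mkContinuous₂
    (LinearMap.mk₂'ₛₗ (starRingEnd ℂ) (RingHom.id ℂ) (fun x y : G => ⟪x, y⟫)
      (fun _ _ _ => inner_add_left)
      (fun _ _ _ => by rw [starRingEnd_apply]; exact inner_smul_left_complex)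
      (fun _ _ _ => inner_add_right)
      (fun _ _ _ => inner_smul_right_complex)) 1
    (fun x y => by simpa using norm_inner_le G (x := x) (y := y))
  exact (L.continuous.comp continuous_fst).clm_apply continuous_snd

end RightCStarModule

end RCSM

open Topology Filter

section Aux

variable {G : Type*} [NormedAddCommGroup G] [NormedSpace ℂ G] [SMul Aᵐᵒᵖ G] [RightCStarModule A G]

private lemma aux_eq_zero {x : G} (h : ∀ z : G, ⟪z, x⟫ = 0) : x = 0 :=
  RightCStarModule.inner_self.mp (h x)

private lemma aux_tendsto_inner {ι : Type*} {l : Filter ι} {f g : ι → G} {a b : G}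
    (hf : Filter.Tendsto f l (𝓝 a)) (hg : Filter.Tendsto g l (𝓝 b)) :
    Filter.Tendsto (fun n => ⟪f n, g n⟫) l (𝓝 ⟪a, b⟫) :=
  (RightCStarModule.continuous_inner.tendsto (a, b)).comp (hf.prodMk_nhds hg)

private lemma aux_inner_closure_zero {s : Set G} {n : G} (h : ∀ z ∈ s, ⟪z, n⟫ = 0)
    {m : G} (hm : m ∈ closure s) : ⟪m, n⟫ = 0 := by
  have hc : Continuous fun z : G => ⟪z, n⟫ :=
    RightCStarModule.continuous_inner.comp (continuous_id.prodMk continuous_const)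
  have hsub : closure s ⊆ (fun z : G => ⟪z, n⟫) ⁻¹' {0} :=
    closure_minimal (fun z hz => h z hz) (isClosed_singleton.preimage hc)
  exact hsub hm

end Aux

/-- Polar decomposition of an adjointable operator between Hilbert C*-modules whose range
and adjoint range have orthocomplemented closures. -/
theorem polar_decomposition (T : E →L[ℂ] F) (S : F →L[ℂ] E)
    (hS : ∀ (x : E) (y : F), ⟪T x, y⟫ = ⟪x, S y⟫)
    (hTorth : ∀ y : F, ∃ y₁ y₂ : F, y = y₁ + y₂ ∧ y₁ ∈ closure (Set.range T) ∧
      ∀ x : E, ⟪T x, y₂⟫ = 0)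
    (hSorth : ∀ x : E, ∃ x₁ x₂ : E, x = x₁ + x₂ ∧ x₁ ∈ closure (Set.range S) ∧
      ∀ y : F, ⟪S y, x₂⟫ = 0)
    (R : E →L[ℂ] E)
    (hRsa : ∀ x y : E, ⟪R x, y⟫ = ⟪x, R y⟫)
    (hRpos : ∀ x : E, 0 ≤ ⟪x, R x⟫)
    (hRR : R.comp R = S.comp T) :
    (∃! u : E →L[ℂ] F,
      (∃ w : F →L[ℂ] E, ∀ (x : E) (y : F), ⟪u x, y⟫ = ⟪x, w y⟫) ∧
      (∀ x : E, T x = 0 → u x = 0) ∧ T = u.comp R) ∧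
    (∀ u : E →L[ℂ] F, (∀ x : E, T x = 0 → u x = 0) → T = u.comp R →
      ∀ w : F →L[ℂ] E, (∀ (x : E) (y : F), ⟪u x, y⟫ = ⟪x, w y⟫) →
        (∀ x : E, u (w (u x)) = u x) ∧
        Set.range u = closure (Set.range T) ∧
        Set.range w = closure (Set.range S)) := by
  classical
  -- Basic consequences of R² = S∘T and self-adjointness of R
  have hRR' : ∀ x : E, R (R x) = S (T x) := fun x => by
    simpa using ContinuousLinearMap.ext_iff.mp hRR x
  have hinnerRT : ∀ x y : E, ⟪R x, R y⟫ = ⟪T x, T y⟫ := fun x y => by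
    rw [hRsa, hRR' y, ← hS]
  have hnormRT : ∀ x : E, ‖R x‖ = ‖T x‖ := fun x => by
    rw [RightCStarModule.norm_eq_sqrt_norm_inner_self (R x),
      RightCStarModule.norm_eq_sqrt_norm_inner_self (T x), hinnerRT]
  have hT0 : ∀ x : E, T x = 0 ↔ R x = 0 := fun x =>
    ⟨fun h => norm_eq_zero.mp (by rw [hnormRT, h, norm_zero]),
     fun h => norm_eq_zero.mp (by rw [← hnormRT, h, norm_zero])⟩
  have hNT : ∀ x : E, (∀ y : F, ⟪S y, x⟫ = 0) → T x = 0 := by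
    intro x h
    have h1 : ⟪T x, T x⟫ = 0 := by
      rw [hS, ← RightCStarModule.star_inner, h (T x), star_zero]
    exact RightCStarModule.inner_self.mp h1
  have hRperpN : ∀ (z n : E), (∀ y : F, ⟪S y, n⟫ = 0) → ⟪R z, n⟫ = 0 := by
    intro z n hn
    rw [hRsa, (hT0 n).mp (hNT n hn), RightCStarModule.inner_zero_right]
  -- The closure of the range of S as a submodule
  have hMS : ∀ v : E, v ∈ closure (Set.range ⇑S) ↔
      v ∈ (LinearMap.range (S : F →ₗ[ℂ] E)).topologicalClosure := by
    intro v
    rw [← SetLike.mem_coe, Submodule.topologicalClosure_coe, LinearMap.coe_range,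
      ContinuousLinearMap.coe_coe]
  -- The projection onto the closure of the range of S
  choose P₁ P₂ hPsum hPmem hPorth using hSorth
  have hPsub : ∀ x : E, P₂ x = x - P₁ x := fun x => by
    rw [eq_sub_iff_add_eq, add_comm]
    exact (hPsum x).symm
  have hxPx : ∀ (x : E) (y : F), ⟪S y, x - P₁ x⟫ = 0 := fun x y => by
    rw [← hPsub]; exact hPorth x y
  have horthS : ∀ {m n : E}, m ∈ closure (Set.range ⇑S) → (∀ y : F, ⟪S y, n⟫ = 0) →
      ⟪m, n⟫ = 0 := by
    intro m n hm hn
    exact aux_inner_closure_zero (fun z hz => by obtain ⟨y, rfl⟩ := hz; exact hn y) hm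
  have hPuniq : ∀ (x m : E), m ∈ closure (Set.range ⇑S) → (∀ y : F, ⟪S y, x - m⟫ = 0) →
      P₁ x = m := by
    intro x m hm hperp
    have hdmem : P₁ x - m ∈ closure (Set.range ⇑S) := by
      rw [hMS]
      exact sub_mem ((hMS _).mp (hPmem x)) ((hMS _).mp hm)
    have hdperp : ∀ y : F, ⟪S y, P₁ x - m⟫ = 0 := by
      intro y
      have h1 : P₁ x - m = (x - m) - (x - P₁ x) := by abel
      rw [h1, RightCStarModule.inner_sub_right, hperp y, hxPx x y, sub_zero]
    have h2 : ⟪P₁ x - m, P₁ x - m⟫ = 0 := horthS hdmem hdperp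
    exact sub_eq_zero.mp (RightCStarModule.inner_self.mp h2)
  have hPadd : ∀ a b : E, P₁ (a + b) = P₁ a + P₁ b := by
    intro a b
    apply hPuniq
    · rw [hMS]
      exact add_mem ((hMS _).mp (hPmem a)) ((hMS _).mp (hPmem b))
    · intro y
      have h1 : a + b - (P₁ a + P₁ b) = (a - P₁ a) + (b - P₁ b) := by abel
      rw [h1, RightCStarModule.inner_add_right, hxPx a y, hxPx b y, add_zero]
  have hPsmul : ∀ (c : ℂ) (a : E), P₁ (c • a) = c • P₁ a := by
    intro c a
    apply hPuniq
    · rw [hMS]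
      exact Submodule.smul_mem _ _ ((hMS _).mp (hPmem a))
    · intro y
      have h1 : c • a - c • P₁ a = c • (a - P₁ a) := (smul_sub c a (P₁ a)).symm
      rw [h1, RightCStarModule.inner_smul_right_complex, hxPx a y, smul_zero]
  have hPid : ∀ m : E, m ∈ closure (Set.range ⇑S) → P₁ m = m := fun m hm =>
    hPuniq m m hm fun y => by rw [sub_self, RightCStarModule.inner_zero_right]
  have hP0 : ∀ n : E, (∀ y : F, ⟪S y, n⟫ = 0) → P₁ n = 0 := fun n hn =>
    hPuniq n 0 (subset_closure ⟨0, map_zero S⟩) fun y => by rw [sub_zero]; exact hn y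
  have hinner_P : ∀ x z : E, ⟪P₁ x, z⟫ = ⟪P₁ x, P₁ z⟫ := by
    intro x z
    have h1 : ⟪P₁ x, z - P₁ z⟫ = 0 := horthS (hPmem x) fun y => hxPx z y
    rw [RightCStarModule.inner_sub_right] at h1
    exact sub_eq_zero.mp h1
  have hinner_P' : ∀ x z : E, ⟪x, P₁ z⟫ = ⟪P₁ x, P₁ z⟫ := fun x z => by
    rw [← RightCStarModule.star_inner, hinner_P z x, RightCStarModule.star_inner]
  -- The range of R lies in the closure of the range of S
  have hRmem : ∀ z : E, R z ∈ closure (Set.range ⇑S) := by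
    intro z
    have hn := hPorth (R z)
    have e1 : P₂ (R z) = R z - P₁ (R z) := hPsub (R z)
    have h3 : ⟪P₂ (R z), P₂ (R z)⟫ = 0 := by
      nth_rewrite 1 [e1]
      rw [RightCStarModule.inner_sub_left, hRperpN z _ hn, horthS (hPmem (R z)) hn, sub_zero]
    have h2 : P₂ (R z) = 0 := RightCStarModule.inner_self.mp h3
    have h4 := hPsum (R z)
    rw [h2, add_zero] at h4
    rw [h4]
    exact hPmem (R z)
  have hPR : ∀ z : E, P₁ (R z) = R z := fun z => hPid _ (hRmem z)
  have hclRS : closure (Set.range ⇑R) ⊆ closure (Set.range ⇑S) :=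
    closure_minimal (by rintro _ ⟨z, rfl⟩; exact hRmem z) isClosed_closure
  -- The range of S lies in the closure of the range of R
  have hSmemR : ∀ y : F, S y ∈ closure (Set.range ⇑R) := by
    intro y
    obtain ⟨y₁, y₂, hsum, hmem, hperp⟩ := hTorth y
    have hSy₂ : S y₂ = 0 := by
      have h0 : ⟪S y₂, S y₂⟫ = 0 := by rw [← hS]; exact hperp _
      exact RightCStarModule.inner_self.mp h0
    have h1 : S y = S y₁ := by rw [hsum, map_add, hSy₂, add_zero]
    have h2 : S y₁ ∈ ⇑S '' closure (Set.range ⇑T) := ⟨y₁, hmem, rfl⟩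
    have h3 : ⇑S '' closure (Set.range ⇑T) ⊆ closure (⇑S '' Set.range ⇑T) :=
      image_closure_subset_closure_image S.continuous
    have h4 : ⇑S '' Set.range ⇑T ⊆ Set.range ⇑R := by
      rintro _ ⟨_, ⟨x, rfl⟩, rfl⟩
      exact ⟨R x, hRR' x⟩
    rw [h1]
    exact closure_mono h4 (h3 h2)
  have hPmemR : ∀ x : E, P₁ x ∈ closure (Set.range ⇑R) := by
    intro x
    have hcl : closure (Set.range ⇑S) ⊆ closure (Set.range ⇑R) :=
      closure_minimal (by rintro _ ⟨y, rfl⟩; exact hSmemR y) isClosed_closure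
    exact hcl (hPmem x)
  -- Approximating sequences
  have hseq : ∀ x : E, ∃ z : ℕ → E,
      Filter.Tendsto (fun n => R (z n)) Filter.atTop (𝓝 (P₁ x)) := by
    intro x
    obtain ⟨g, hg, hgl⟩ := mem_closure_iff_seq_limit.mp (hPmemR x)
    choose z hz using hg
    exact ⟨z, by simpa only [hz] using hgl⟩
  have hdistRT : ∀ a b : E, ‖T a - T b‖ = ‖R a - R b‖ := fun a b => by
    rw [← map_sub, ← map_sub, hnormRT]
  have hTconv : ∀ z : ℕ → E, CauchySeq (fun n => R (z n)) →
      ∃ yF : F, Filter.Tendsto (fun n => T (z n)) Filter.atTop (𝓝 yF) := by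
    intro z hz
    have hc : CauchySeq fun n => T (z n) := by
      rw [Metric.cauchySeq_iff] at hz ⊢
      intro ε hε
      obtain ⟨N, hN⟩ := hz ε hε
      exact ⟨N, fun m hm n hn => by
        simpa only [dist_eq_norm, hdistRT] using hN m hm n hn⟩
    exact cauchySeq_tendsto_of_complete hc
  have hRconv : ∀ z : ℕ → E, CauchySeq (fun n => T (z n)) →
      ∃ e : E, Filter.Tendsto (fun n => R (z n)) Filter.atTop (𝓝 e) := by
    intro z hz
    have hc : CauchySeq fun n => R (z n) := by
      rw [Metric.cauchySeq_iff] at hz ⊢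
      intro ε hε
      obtain ⟨N, hN⟩ := hz ε hε
      exact ⟨N, fun m hm n hn => by
        simpa only [dist_eq_norm, ← hdistRT] using hN m hm n hn⟩
    exact cauchySeq_tendsto_of_complete hc
  -- Definition of u₀
  have hU : ∀ x : E, ∃ yF : F, ∀ z : ℕ → E,
      Filter.Tendsto (fun n => R (z n)) Filter.atTop (𝓝 (P₁ x)) →
      Filter.Tendsto (fun n => T (z n)) Filter.atTop (𝓝 yF) := by
    intro x
    obtain ⟨z₀, hz₀⟩ := hseq x
    obtain ⟨yF, hy⟩ := hTconv z₀ hz₀.cauchySeq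
    refine ⟨yF, fun z hz => ?_⟩
    have h0 : Filter.Tendsto (fun n => R (z n) - R (z₀ n)) Filter.atTop (𝓝 0) := by
      simpa using hz.sub hz₀
    have h1 : Filter.Tendsto (fun n => ‖T (z n) - T (z₀ n)‖) Filter.atTop (𝓝 0) := by
      simpa only [← hdistRT] using tendsto_zero_iff_norm_tendsto_zero.mp h0
    have h2 : Filter.Tendsto (fun n => T (z n) - T (z₀ n)) Filter.atTop (𝓝 0) :=
      tendsto_zero_iff_norm_tendsto_zero.mpr h1
    simpa using h2.add hy
  choose u0 hu0 using hU
  -- Basic properties of u₀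
  have hu0R : ∀ x : E, u0 (R x) = T x := by
    intro x
    have h1 : Filter.Tendsto (fun _ : ℕ => R x) Filter.atTop (𝓝 (P₁ (R x))) := by
      rw [hPR]; exact tendsto_const_nhds
    exact tendsto_nhds_unique (hu0 (R x) _ h1) tendsto_const_nhds
  have hu0P : ∀ a b : E, P₁ a = P₁ b → u0 a = u0 b := by
    intro a b hab
    obtain ⟨z, hz⟩ := hseq a
    exact tendsto_nhds_unique (hu0 a z hz) (hu0 b z (by rw [← hab]; exact hz))
  have hu0add : ∀ a b : E, u0 (a + b) = u0 a + u0 b := by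
    intro a b
    obtain ⟨z, hz⟩ := hseq a
    obtain ⟨w, hw⟩ := hseq b
    have h1 : Filter.Tendsto (fun n => R (z n + w n)) Filter.atTop (𝓝 (P₁ (a + b))) := by
      rw [hPadd]
      simpa only [map_add] using hz.add hw
    have h3 : Filter.Tendsto (fun n => T (z n + w n)) Filter.atTop (𝓝 (u0 a + u0 b)) := by
      simpa only [map_add] using (hu0 a z hz).add (hu0 b w hw)
    exact tendsto_nhds_unique (hu0 (a + b) _ h1) h3
  have hu0smul : ∀ (c : ℂ) (a : E), u0 (c • a) = c • u0 a := by
    intro c a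
    obtain ⟨z, hz⟩ := hseq a
    have h1 : Filter.Tendsto (fun n => R (c • z n)) Filter.atTop (𝓝 (P₁ (c • a))) := by
      rw [hPsmul]
      simpa only [map_smul] using hz.const_smul c
    exact tendsto_nhds_unique (hu0 (c • a) _ h1)
      (by simpa only [map_smul] using (hu0 a z hz).const_smul c)
  have hu0inner : ∀ a b : E, ⟪u0 a, u0 b⟫ = ⟪P₁ a, P₁ b⟫ := by
    intro a b
    obtain ⟨z, hz⟩ := hseq a
    obtain ⟨w, hw⟩ := hseq b
    have h1 := aux_tendsto_inner (hu0 a z hz) (hu0 b w hw)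
    have h2 := aux_tendsto_inner hz hw
    have h3 : (fun n => ⟪R (z n), R (w n)⟫) = fun n => ⟪T (z n), T (w n)⟫ := by
      funext n; exact hinnerRT _ _
    rw [h3] at h2
    exact tendsto_nhds_unique h1 h2
  have hu0norm_eq : ∀ x : E, ‖u0 x‖ = ‖P₁ x‖ := fun x => by
    rw [RightCStarModule.norm_eq_sqrt_norm_inner_self (u0 x),
      RightCStarModule.norm_eq_sqrt_norm_inner_self (P₁ x), hu0inner]
  have hPnorm : ∀ x : E, ‖P₁ x‖ ≤ ‖x‖ := by
    intro x
    have h2 : ‖P₁ x‖ ^ 2 ≤ ‖P₁ x‖ * ‖x‖ := by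
      rw [RightCStarModule.norm_sq_eq, (hinner_P x x).symm.trans rfl]
      · exact RightCStarModule.norm_inner_le E
    nlinarith [norm_nonneg (P₁ x), norm_nonneg x]
  have hu0norm : ∀ x : E, ‖u0 x‖ ≤ 1 * ‖x‖ := fun x => by
    rw [one_mul, hu0norm_eq]; exact hPnorm x
  have hPker : ∀ x : E, R x = 0 → P₁ x = 0 := by
    intro x hx
    have h1 : ∀ z ∈ Set.range ⇑R, ⟪z, x⟫ = 0 := by
      rintro _ ⟨z, rfl⟩
      rw [hRsa, hx, RightCStarModule.inner_zero_right]
    have h2 : ⟪P₁ x, x⟫ = 0 := aux_inner_closure_zero h1 (hPmemR x)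
    have h3 : ⟪P₁ x, P₁ x⟫ = 0 := (hinner_P x x).symm.trans h2
    exact RightCStarModule.inner_self.mp h3
  have hu0ker : ∀ x : E, T x = 0 → u0 x = 0 := by
    intro x hx
    have h1 : P₁ x = 0 := hPker x ((hT0 x).mp hx)
    have h2 : u0 x = u0 0 := hu0P x 0 (by
      rw [h1, hP0 0 fun y => RightCStarModule.inner_zero_right])
    have h3 : u0 0 = 0 := by
      have h4 := hu0R 0
      rwa [map_zero, map_zero] at h4
    rw [h2, h3]
  -- Bundle u₀ as a continuous linear map
  let uL : E →ₗ[ℂ] F := { toFun := u0, map_add' := hu0add, map_smul' := hu0smul }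
  let u_clm : E →L[ℂ] F := LinearMap.mkContinuous uL 1 hu0norm
  -- Construction of the adjoint w₀
  choose Q₁ Q₂ hQsum hQmem hQorth using hTorth
  have hW : ∀ y : F, ∃ (e : E) (z : ℕ → E),
      Filter.Tendsto (fun n => T (z n)) Filter.atTop (𝓝 (Q₁ y)) ∧
      Filter.Tendsto (fun n => R (z n)) Filter.atTop (𝓝 e) := by
    intro y
    obtain ⟨g, hg, hgl⟩ := mem_closure_iff_seq_limit.mp (hQmem y)
    choose z hz using hg
    have hzT : Filter.Tendsto (fun n => T (z n)) Filter.atTop (𝓝 (Q₁ y)) := by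
      simpa only [hz] using hgl
    obtain ⟨e, he⟩ := hRconv z hzT.cauchySeq
    exact ⟨e, z, hzT, he⟩
  choose w0 zw hzwT hzwR using hW
  have hu0memT : ∀ x : E, u0 x ∈ closure (Set.range ⇑T) := by
    intro x
    obtain ⟨z, hz⟩ := hseq x
    exact mem_closure_of_tendsto (hu0 x z hz) (Filter.Eventually.of_forall fun n => ⟨z n, rfl⟩)
  have hw0memS : ∀ y : F, w0 y ∈ closure (Set.range ⇑S) := by
    intro y
    exact hclRS (mem_closure_of_tendsto (hzwR y)
      (Filter.Eventually.of_forall fun n => ⟨zw y n, rfl⟩))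
  have hadj : ∀ (x : E) (y : F), ⟪u0 x, y⟫ = ⟪x, w0 y⟫ := by
    intro x y
    obtain ⟨z, hz⟩ := hseq x
    have h1 : ⟪u0 x, Q₂ y⟫ = 0 :=
      aux_inner_closure_zero (fun q hq => by obtain ⟨a, rfl⟩ := hq; exact hQorth y a)
        (hu0memT x)
    have h2 : Filter.Tendsto (fun n => ⟪T (z n), T (zw y n)⟫) Filter.atTop
        (𝓝 ⟪u0 x, Q₁ y⟫) := aux_tendsto_inner (hu0 x z hz) (hzwT y)
    have h3 : Filter.Tendsto (fun n => ⟪T (z n), T (zw y n)⟫) Filter.atTop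
        (𝓝 ⟪P₁ x, w0 y⟫) := by
      have h5 := aux_tendsto_inner hz (hzwR y)
      have heq : (fun n => ⟪R (z n), R (zw y n)⟫) = fun n => ⟪T (z n), T (zw y n)⟫ := by
        funext n; exact hinnerRT _ _
      rwa [heq] at h5
    have h4 : ⟪u0 x, Q₁ y⟫ = ⟪P₁ x, w0 y⟫ := tendsto_nhds_unique h2 h3
    have h5 : ⟪x - P₁ x, w0 y⟫ = 0 := by
      rw [← RightCStarModule.star_inner, horthS (hw0memS y) (fun y' => hxPx x y'), star_zero]
    calc ⟪u0 x, y⟫ = ⟪u0 x, Q₁ y + Q₂ y⟫ := by rw [← hQsum y]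
      _ = ⟪u0 x, Q₁ y⟫ + ⟪u0 x, Q₂ y⟫ := RightCStarModule.inner_add_right
      _ = ⟪P₁ x, w0 y⟫ := by rw [h1, h4, add_zero]
      _ = ⟪x, w0 y⟫ - ⟪x - P₁ x, w0 y⟫ := by rw [RightCStarModule.inner_sub_left]; abel
      _ = ⟪x, w0 y⟫ := by rw [h5, sub_zero]
  have hw0add : ∀ a b : F, w0 (a + b) = w0 a + w0 b := by
    intro a b
    have h : ∀ x : E, ⟪x, w0 (a + b) - (w0 a + w0 b)⟫ = 0 := by
      intro x
      simp only [RightCStarModule.inner_sub_right, RightCStarModule.inner_add_right, ← hadj]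
      abel
    exact sub_eq_zero.mp (aux_eq_zero h)
  have hw0smul : ∀ (c : ℂ) (a : F), w0 (c • a) = c • w0 a := by
    intro c a
    have h : ∀ x : E, ⟪x, w0 (c • a) - c • w0 a⟫ = 0 := by
      intro x
      simp only [RightCStarModule.inner_sub_right, RightCStarModule.inner_smul_right_complex, ← hadj]
      abel
    exact sub_eq_zero.mp (aux_eq_zero h)
  have hw0norm : ∀ y : F, ‖w0 y‖ ≤ 1 * ‖y‖ := by
    intro y
    rw [one_mul]
    have h1 : ⟪w0 y, w0 y⟫ = ⟪u0 (w0 y), y⟫ := (hadj (w0 y) y).symm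
    have h2 : ‖w0 y‖ ^ 2 ≤ ‖w0 y‖ * ‖y‖ := by
      rw [RightCStarModule.norm_sq_eq, h1]
      calc ‖⟪u0 (w0 y), y⟫‖ ≤ ‖u0 (w0 y)‖ * ‖y‖ := RightCStarModule.norm_inner_le F
        _ ≤ ‖w0 y‖ * ‖y‖ := by
          have h6 := hu0norm (w0 y)
          rw [one_mul] at h6
          exact mul_le_mul_of_nonneg_right h6 (norm_nonneg y)
    nlinarith [norm_nonneg (w0 y), norm_nonneg y]
  let wL : F →ₗ[ℂ] E := { toFun := w0, map_add' := hw0add, map_smul' := hw0smul }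
  let w_clm : F →L[ℂ] E := LinearMap.mkContinuous wL 1 hw0norm
  -- Uniqueness
  have huniq : ∀ u' : E →L[ℂ] F, (∀ x : E, T x = 0 → u' x = 0) → T = u'.comp R →
      ∀ x : E, u' x = u0 x := by
    intro u' hker' hTR' x
    have hagree : closure (Set.range ⇑R) ⊆ {v : E | u' v = u0 v} := by
      apply closure_minimal
      · rintro _ ⟨z, rfl⟩
        show u' (R z) = u0 (R z)
        rw [hu0R z]
        simpa using (ContinuousLinearMap.ext_iff.mp hTR' z).symm
      · exact isClosed_eq u'.continuous u_clm.continuous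
    have h1 : u' (P₁ x) = u0 (P₁ x) := hagree (hPmemR x)
    have h2 : u' (x - P₁ x) = 0 := hker' _ (hNT _ fun y => hxPx x y)
    have h3 : u0 (x - P₁ x) = 0 := hu0ker _ (hNT _ fun y => hxPx x y)
    have hxeq : P₁ x + (x - P₁ x) = x := by abel
    have h4 : u0 x = u0 (P₁ x) + u0 (x - P₁ x) := by rw [← hu0add, hxeq]
    have h5 : u' x = u' (P₁ x) + u' (x - P₁ x) := by rw [← map_add, hxeq]
    rw [h5, h1, h2, h4, h3]
  constructor
  · refine ⟨u_clm, ⟨⟨w_clm, fun x y => hadj x y⟩, fun x hx => hu0ker x hx, ?_⟩, ?_⟩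
    · ext z
      show T z = u0 (R z)
      exact (hu0R z).symm
    · rintro u' ⟨⟨w', hw'⟩, hker', hTR'⟩
      ext x
      show u' x = u0 x
      exact huniq u' hker' hTR' x
  · intro u hker hTu w hw
    have hu_eq : ∀ x, u x = u0 x := huniq u hker hTu
    have hw_eq : ∀ y, w y = w0 y := by
      intro y
      have h : ∀ x : E, ⟪x, w y - w0 y⟫ = 0 := by
        intro x
        rw [RightCStarModule.inner_sub_right, ← hw x y, ← hadj x y, hu_eq x, sub_self]
      exact sub_eq_zero.mp (aux_eq_zero h)
    have hwu : ∀ b : E, w (u b) = P₁ b := by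
      intro b
      have h : ∀ x : E, ⟪x, w (u b) - P₁ b⟫ = 0 := by
        intro x
        rw [RightCStarModule.inner_sub_right, ← hw x (u b), hu_eq x, hu_eq b, hu0inner, hinner_P' x b,
          sub_self]
      exact sub_eq_zero.mp (aux_eq_zero h)
    refine ⟨?_, ?_, ?_⟩
    · intro x
      rw [hwu x, hu_eq (P₁ x), hu_eq x]
      exact hu0P _ _ (hPid _ (hPmem x))
    · apply Set.Subset.antisymm
      · rintro _ ⟨x, rfl⟩
        rw [hu_eq x]
        exact hu0memT x
      · intro q hq
        have hcl : closure (Set.range ⇑T) ⊆ {y : F | u (w y) = y} := by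
          apply closure_minimal
          · rintro _ ⟨z, rfl⟩
            show u (w (T z)) = T z
            have h1 : T z = u (R z) := by
              simpa using ContinuousLinearMap.ext_iff.mp hTu z
            rw [h1, hwu (R z), hPR z]
          · exact isClosed_eq (u.continuous.comp w.continuous) continuous_id
        exact ⟨w q, hcl hq⟩
    · apply Set.Subset.antisymm
      · rintro _ ⟨y, rfl⟩
        rw [hw_eq y]
        exact hw0memS y
      · intro m hm
        exact ⟨u m, by rw [hwu m, hPid m hm]⟩
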